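/- arXiv:2204.09449 — 5 statements merged into one kernel-verified Lean document; each statement's English description precedes it below -/
import Mathlib

section
/- Let U be an open neighborhood of 0 in ℂ² and let f : ℂ² → ℂ² be holomorphic (complex analytic) on U with f(0) = 0 and Fréchet derivative Df(0) equal to the identity. Assume that for every x ∈ U one has f(x) ∈ U and f(f(x)) = x. Then there is a neighborhood V of 0 such that f(x) = x for all x ∈ V. In other words, a holomorphic involution of (ℂ²,0) tangent to the identity is the identity. -/
/-- A holomorphic involution of `(ℂ², 0)` tangent to the identity is the
identity on a neighborhood of `0`. -/
theorem holomorphic_involution_tangent_to_identity_is_identity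
    (U : Set (ℂ × ℂ)) (hU : IsOpen U) (h0 : (0 : ℂ × ℂ) ∈ U)
    (f : ℂ × ℂ → ℂ × ℂ) (hf : AnalyticOnNhd ℂ f U)
    (hf0 : f 0 = 0) (hdf : fderiv ℂ f 0 = ContinuousLinearMap.id ℂ (ℂ × ℂ))
    (hmaps : ∀ x ∈ U, f x ∈ U) (hinv : ∀ x ∈ U, f (f x) = x) :
    ∃ V ∈ nhds (0 : ℂ × ℂ), ∀ x ∈ V, f x = x := by
  set h : ℂ × ℂ → ℂ × ℂ := fun x => (2 : ℂ)⁻¹ • (x + f x) with hh_def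
  -- h is analytic at 0
  have hA : AnalyticAt ℂ h 0 := by
    exact ((analyticAt_const (v := (2 : ℂ)⁻¹)).smul ((analyticAt_id).add (hf 0 h0)))
  -- derivative of h at 0 is the identity
  have hd : HasFDerivAt f (ContinuousLinearMap.id ℂ (ℂ × ℂ)) 0 := by
    have := (hf 0 h0).differentiableAt.hasFDerivAt
    rwa [hdf] at this
  have hfd : HasFDerivAt h (ContinuousLinearMap.id ℂ (ℂ × ℂ)) 0 := by
    have h1 : HasFDerivAt (fun x : ℂ × ℂ => x + f x)
        (ContinuousLinearMap.id ℂ (ℂ × ℂ) + ContinuousLinearMap.id ℂ (ℂ × ℂ)) 0 :=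
      (hasFDerivAt_id 0).add hd
    have h2 := h1.const_smul (2 : ℂ)⁻¹
    have e : (2 : ℂ)⁻¹ • (ContinuousLinearMap.id ℂ (ℂ × ℂ) + ContinuousLinearMap.id ℂ (ℂ × ℂ)) = ContinuousLinearMap.id ℂ (ℂ × ℂ) := by
      ext x <;> simp <;> ring
    rw [e] at h2
    exact h2
  have hs : HasStrictFDerivAt h
      ((ContinuousLinearEquiv.refl ℂ (ℂ × ℂ) :
        (ℂ × ℂ) ≃L[ℂ] (ℂ × ℂ)) : (ℂ × ℂ) →L[ℂ] (ℂ × ℂ)) 0 := by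
    have := hA.hasStrictFDerivAt
    rwa [hfd.fderiv] at this
  -- inverse function theorem: h is injective near 0
  set φ := hs.toOpenPartialHomeomorph h with hφ
  have hsource : φ.source ∈ nhds (0 : ℂ × ℂ) :=
    φ.open_source.mem_nhds hs.mem_toOpenPartialHomeomorph_source
  have hinj : Set.InjOn h φ.source := by
    have := φ.injOn
    rwa [hs.toOpenPartialHomeomorph_coe] at this
  -- h ∘ f = h on U
  have hkey : ∀ x ∈ U, h (f x) = h x := by
    intro x hx
    simp only [hh_def, hinv x hx, add_comm]
  -- f is continuous at 0
  have hcont : ContinuousAt f 0 := (hf 0 h0).continuousAt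
  have hpre : f ⁻¹' φ.source ∈ nhds (0 : ℂ × ℂ) := by
    apply hcont
    rwa [hf0]
  refine ⟨φ.source ∩ f ⁻¹' φ.source ∩ U, ?_, ?_⟩
  · exact Filter.inter_mem (Filter.inter_mem hsource hpre) (hU.mem_nhds h0)
  · rintro x ⟨⟨hx1, hx2⟩, hx3⟩
    exact hinj hx2 hx1 (hkey x hx3)
end

section
/- Let λ ∈ ℂ with |λ| = 1, let Λ = diag(λ, λ⁻¹) and σ = [[0,1],[1,0]] in M₂(ℂ), and for a matrix B write B̄ for its entrywise complex conjugate. Suppose A ∈ M₂(ℂ) satisfies A·Ā = 1 and σ·A·σ·Ā = Λ. Then there exist μ ∈ ℂ with μ² = λ and an invertible matrix M ∈ M₂(ℂ) such that M⁻¹·A·M̄ = diag(μ⁻¹, μ). Equivalently, the antiholomorphic map ξ ↦ A·ξ̄ of ℂ² is linearly conjugate to ξ ↦ Λ^{-1/2}·ξ̄, where Λ^{1/2} = diag(μ, μ⁻¹). -/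
open Matrix

private lemma map_fin_two' (f : ℂ → ℂ) (a b c d : ℂ) :
    (!![a,b;c,d]).map f = !![f a, f b; f c, f d] := by
  ext i j; fin_cases i <;> fin_cases j <;> simp

private lemma diag_two' (x y : ℂ) : Matrix.diagonal ![x,y] = !![x,0;0,y] := by
  ext i j; fin_cases i <;> fin_cases j <;> simp [Matrix.diagonal]

private lemma of_fin_two_eq {e1 e2 e3 e4 f1 f2 f3 f4 : ℂ} (h1 : e1 = f1) (h2 : e2 = f2)
    (h3 : e3 = f3) (h4 : e4 = f4) : !![e1,e2;e3,e4] = !![f1,f2;f3,f4] := by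
  rw [h1, h2, h3, h4]

/-- an antiholomorphic linear involution `ξ ↦ A ξ̄` with
`σ A σ Ā = Λ = diag(λ, λ⁻¹)`, `|λ| = 1`, is linearly conjugate to
`ξ ↦ diag(μ⁻¹, μ) ξ̄` for some square root `μ` of `λ`. -/
theorem antiholomorphic_involution_linear_normal_form
    (l : ℂ) (hl : ‖l‖ = 1)
    (Λ σ : Matrix (Fin 2) (Fin 2) ℂ)
    (hΛ : Λ = Matrix.diagonal ![l, l⁻¹]) (hσ : σ = !![0, 1; 1, 0])
    (A : Matrix (Fin 2) (Fin 2) ℂ)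
    (hinv : A * A.map (starRingEnd ℂ) = 1)
    (hcomp : σ * A * σ * A.map (starRingEnd ℂ) = Λ) :
    ∃ (μ : ℂ) (M : Matrix (Fin 2) (Fin 2) ℂ), μ ^ 2 = l ∧ IsUnit M ∧
      M⁻¹ * A * M.map (starRingEnd ℂ) = Matrix.diagonal ![μ⁻¹, μ] := by
  subst hΛ hσ
  set C := starRingEnd ℂ with hC
  have hCC : ∀ z : ℂ, C (C z) = z := by simp [hC]
  have hCI : C Complex.I = -Complex.I := by simp [hC]
  have hll : l * C l = 1 := by rw [hC, Complex.mul_conj, Complex.normSq_eq_norm_sq, hl]; norm_num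
  have hl0 : l ≠ 0 := by intro h; rw [h] at hll; simp at hll
  obtain ⟨μ, hμ⟩ : ∃ μ : ℂ, μ ^ 2 = l := IsAlgClosed.exists_pow_nat_eq l (n := 2) (by norm_num)
  have hμabs : ‖μ‖ = 1 := by
    have h2 : ‖μ‖ ^ 2 = 1 := by rw [← norm_pow, hμ, hl]
    nlinarith [norm_nonneg μ]
  have hμ1 : μ * C μ = 1 := by rw [hC, Complex.mul_conj, Complex.normSq_eq_norm_sq, hμabs]; norm_num
  have hμ0 : μ ≠ 0 := by intro h; rw [h] at hμ1; simp at hμ1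
  have hμinv : μ⁻¹ = C μ := inv_eq_of_mul_eq_one_right hμ1
  have hinv' : A.map C * A = 1 := mul_eq_one_comm.mp hinv
  have hσAσ : !![0, 1; 1, 0] * A * !![0, 1; 1, 0] = Matrix.diagonal ![l, l⁻¹] * A := by
    calc !![(0:ℂ), 1; 1, 0] * A * !![0, 1; 1, 0]
        = !![0, 1; 1, 0] * A * !![0, 1; 1, 0] * (A.map C * A) := by rw [hinv', mul_one]
      _ = (!![0, 1; 1, 0] * A * !![0, 1; 1, 0] * A.map C) * A := by
          simp only [Matrix.mul_assoc]
      _ = Matrix.diagonal ![l, l⁻¹] * A := by rw [hcomp]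
  set a := A 0 0 with ha
  set b := A 0 1 with hb
  set c := A 1 0 with hc0
  set d := A 1 1 with hd0
  have hA : A = !![a,b;c,d] := by rw [ha, hb, hc0, hd0]; exact Matrix.eta_fin_two A
  have hd : d = l * a := by
    have := congrFun (congrFun hσAσ 0) 0
    simpa [hA, diag_two', Matrix.mul_fin_two] using this
  have hc : c = l * b := by
    have := congrFun (congrFun hσAσ 0) 1
    simpa [hA, diag_two', Matrix.mul_fin_two] using this
  have h1 : a * C a + b * C c = 1 := by
    have := congrFun (congrFun hinv 0) 0
    simpa [hA, map_fin_two', Matrix.mul_fin_two] using this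
  have h2 : a * C b + b * C d = 0 := by
    have := congrFun (congrFun hinv 0) 1
    simpa [hA, map_fin_two', Matrix.mul_fin_two] using this
  have h4 : c * C b + d * C d = 1 := by
    have := congrFun (congrFun hinv 1) 1
    simpa [hA, map_fin_two', Matrix.mul_fin_two] using this
  rw [hc, hd] at hA
  have hCc : C c = C l * C b := by rw [hc, _root_.map_mul]
  have hCd : C d = C l * C a := by rw [hd, _root_.map_mul]
  rw [hCc] at h1
  rw [hCd] at h2
  rw [hCd, hc, hd] at h4
  -- h1 : a * C a + b * (C l * C b) = 1
  -- h2 : a * C b + b * (C l * C a) = 0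
  -- h4 : l * b * C b + l * a * (C l * C a) = 1
  by_cases hb0 : b = 0
  · -- diagonal case
    have h1' : a * C a = 1 := by rw [hb0] at h1; simpa using h1
    obtain ⟨p, hp⟩ : ∃ p : ℂ, p ^ 2 = a * μ := IsAlgClosed.exists_pow_nat_eq _ (n := 2) (by norm_num)
    have hCp2 : C p * C p = C a * C μ := by
      have := congrArg C hp
      simp only [map_pow, _root_.map_mul, sq] at this
      linear_combination this
    have hp1 : p * C p = 1 := by
      have e : (p * C p) ^ 2 = 1 := by
        have : (p * C p) ^ 2 = (a * C a) * (μ * C μ) := by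
          rw [sq, show p * C p * (p * C p) = (p^2) * (C p * C p) by ring, hp, hCp2]; ring
        rw [this, h1', hμ1, mul_one]
      have e2 : (Complex.normSq p : ℂ) ^ 2 = 1 := by
        rw [← Complex.mul_conj]; exact e
      have e3 : (Complex.normSq p : ℝ) ^ 2 = 1 := by exact_mod_cast e2
      have e4 : Complex.normSq p = 1 := by nlinarith [Complex.normSq_nonneg p]
      rw [hC, Complex.mul_conj]; exact_mod_cast e4
    refine ⟨μ, !![p,0;0,p], hμ, ?_, ?_⟩
    · have hMN : !![p,0;0,p] * !![C p,0;0,C p] = 1 := by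
        rw [Matrix.mul_fin_two, Matrix.one_fin_two]
        exact of_fin_two_eq (by linear_combination hp1) (by ring) (by ring) (by linear_combination hp1)
      have hNM : !![C p,0;0,C p] * !![p,0;0,p] = 1 := by
        rw [Matrix.mul_fin_two, Matrix.one_fin_two]
        exact of_fin_two_eq (by linear_combination hp1) (by ring) (by ring) (by linear_combination hp1)
      exact ⟨⟨_, _, hMN, hNM⟩, rfl⟩
    · have hMN : !![p,0;0,p] * !![C p,0;0,C p] = 1 := by
        rw [Matrix.mul_fin_two, Matrix.one_fin_two]
        exact of_fin_two_eq (by linear_combination hp1) (by ring) (by ring) (by linear_combination hp1)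
      rw [Matrix.inv_eq_right_inv hMN, hA, hb0, mul_zero, map_fin_two', diag_two', hμinv,
        Matrix.mul_fin_two, Matrix.mul_fin_two]
      simp only [_root_.map_mul, map_zero]
      refine of_fin_two_eq ?_ (by ring) (by ring) ?_
      · linear_combination a * hCp2 + C μ * h1'
      · linear_combination (l * a) * hCp2 + (l * C μ) * h1' - C μ * hμ + μ * hμ1
  · -- b ≠ 0
    have hCb0 : C b ≠ 0 := by simp [hC, hb0]
    have key : (C l - l) * (b * C b) = 0 := by
      linear_combination h1 - h4 + (a * C a) * hll
    have hlreal : C l = l := by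
      have := (mul_eq_zero.mp key).resolve_right (mul_ne_zero hb0 hCb0)
      linear_combination this
    by_cases hμreal : μ = C μ
    · -- M = !![μ + a, I*(Cμ - a); l*b, -(I*(l*b))]
      set M : Matrix (Fin 2) (Fin 2) ℂ :=
        !![μ + a, Complex.I * (C μ - a); l*b, -(Complex.I * (l*b))] with hM
      have hdet : IsUnit M.det := by
        rw [hM, Matrix.det_fin_two_of, isUnit_iff_ne_zero]
        intro h
        have h' : -(Complex.I * l * b * (μ + C μ)) = 0 := by linear_combination h
        have hsum : μ + C μ ≠ 0 := by rw [← hμreal]; intro h''; apply hμ0; linear_combination h'' / 2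
        exact (mul_ne_zero (mul_ne_zero (mul_ne_zero Complex.I_ne_zero hl0) hb0) hsum)
          (by linear_combination -h')
      refine ⟨μ, M, hμ, (Matrix.isUnit_iff_isUnit_det M).mpr hdet, ?_⟩
      have hAM : A * M.map C = M * Matrix.diagonal ![μ⁻¹, μ] := by
        rw [hA, hM, map_fin_two', diag_two', hμinv, Matrix.mul_fin_two, Matrix.mul_fin_two]
        simp only [_root_.map_mul, _root_.map_add, _root_.map_sub, _root_.map_neg, hCC, hCI]
        refine of_fin_two_eq ?_ ?_ ?_ ?_
        · linear_combination h1 - hμ1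
        · linear_combination Complex.I * h1 - Complex.I * hμ1
        · linear_combination h2 + (a * C b) * hll - (b * C a) * hlreal
        · linear_combination Complex.I * h2 + (Complex.I * a * C b) * hll
            - (Complex.I * b * C a) * hlreal
      rw [Matrix.mul_assoc, hAM, ← Matrix.mul_assoc, Matrix.nonsing_inv_mul M hdet, Matrix.one_mul]
    · set M : Matrix (Fin 2) (Fin 2) ℂ := !![μ + a, C μ + a; l*b, l*b] with hM
      have hdet : IsUnit M.det := by
        rw [hM, Matrix.det_fin_two_of, isUnit_iff_ne_zero]
        intro h
        have h' : l * b * (μ - C μ) = 0 := by linear_combination h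
        exact (mul_ne_zero (mul_ne_zero hl0 hb0) (sub_ne_zero.mpr hμreal)) h'
      refine ⟨μ, M, hμ, (Matrix.isUnit_iff_isUnit_det M).mpr hdet, ?_⟩
      have hAM : A * M.map C = M * Matrix.diagonal ![μ⁻¹, μ] := by
        rw [hA, hM, map_fin_two', diag_two', hμinv, Matrix.mul_fin_two, Matrix.mul_fin_two]
        simp only [_root_.map_mul, _root_.map_add, hCC]
        refine of_fin_two_eq ?_ ?_ ?_ ?_
        · linear_combination h1 - hμ1
        · linear_combination h1 - hμ1
        · linear_combination h2 + (a * C b) * hll - (b * C a) * hlreal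
        · linear_combination h2 + (a * C b) * hll - (b * C a) * hlreal
      rw [Matrix.mul_assoc, hAM, ← Matrix.mul_assoc, Matrix.nonsing_inv_mul M hdet, Matrix.one_mul]
end

section
/- Let T₁, T₂ ∈ M₂(ℂ) be linear reflections, i.e. T₁² = T₂² = 1 and T₁, T₂ ∉ {1, −1}. Suppose the product T₁·T₂ is conjugate in M₂(ℂ) to the diagonal matrix diag(λ, λ⁻¹) for some λ ∈ ℂ with λ ≠ 1. Then there exist g ∈ ℂ with g² = λ + λ⁻¹ + 2 and an invertible matrix P ∈ M₂(ℂ) such that P⁻¹·T₁·P = [[1,0],[−g,−1]] and P⁻¹·T₂·P = [[−1,−g],[0,1]]. -/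
open Matrix

lemma aux_CH (A : Matrix (Fin 2) (Fin 2) ℂ) :
    A * A + A.det • 1 = A.trace • A := by
  ext i j
  fin_cases i <;> fin_cases j <;>
    simp [Matrix.mul_apply, Fin.sum_univ_two, Matrix.det_fin_two, Matrix.trace_fin_two,
      Matrix.one_apply] <;> ring

lemma aux_dep (u v : Fin 2 → ℂ) (i : Fin 2) (hu : u i ≠ 0)
    (h : u 0 * v 1 - v 0 * u 1 = 0) : ∃ c : ℂ, v = c • u := by
  fin_cases i <;> simp only [Fin.zero_eta, Fin.mk_one, Fin.isValue] at hu
  · refine ⟨(v 0 / u 0 : ℂ), funext fun j => ?_⟩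
    fin_cases j
    · simp; field_simp
    · simp only [Pi.smul_apply, smul_eq_mul]
      field_simp
      simp only [Fin.zero_eta, Fin.mk_one, Fin.isValue] at *
      linear_combination h
  · refine ⟨(v 1 / u 1 : ℂ), funext fun j => ?_⟩
    fin_cases j
    · simp only [Pi.smul_apply, smul_eq_mul]
      field_simp
      simp only [Fin.zero_eta, Fin.mk_one, Fin.isValue] at *
      linear_combination -h
    · simp; field_simp

lemma aux_ker (A : Matrix (Fin 2) (Fin 2) ℂ) (hA : A.det ≠ 0) (v : Fin 2 → ℂ)
    (i : Fin 2) (hv : v i ≠ 0) (h : A *ᵥ v = 0) : False := by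
  have h1 : A⁻¹ *ᵥ (A *ᵥ v) = v := by
    rw [Matrix.mulVec_mulVec, Matrix.nonsing_inv_mul _ (isUnit_iff_ne_zero.mpr hA),
      Matrix.one_mulVec]
  rw [h] at h1
  simp at h1
  exact hv (by rw [← h1]; simp)

lemma aux_cols (T P : Matrix (Fin 2) (Fin 2) ℂ) (u v : Fin 2 → ℂ) (a b c d : ℂ)
    (hP : P = !![u 0, v 0; u 1, v 1])
    (h1 : T *ᵥ u = a • u + c • v) (h2 : T *ᵥ v = b • u + d • v) :
    T * P = P * !![a, b; c, d] := by
  subst hP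
  ext i j
  have e1 := congrFun h1 i
  have e2 := congrFun h2 i
  simp only [Matrix.mulVec, dotProduct, Fin.sum_univ_two, Pi.add_apply,
    Pi.smul_apply, smul_eq_mul] at e1 e2
  fin_cases i <;> fin_cases j <;>
    simp [Matrix.mul_apply, Fin.sum_univ_two] at * <;>
      first | linear_combination e1 | linear_combination e2

/-- a pair of linear reflections of `ℂ²` whose product is conjugate to
`diag(λ, λ⁻¹)` with `λ ≠ 1` can be simultaneously conjugated to the Moser–Webster
normal forms `[[1,0],[-g,-1]]`, `[[-1,-g],[0,1]]` with `g² = λ + λ⁻¹ + 2`. -/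
theorem pair_of_reflections_normal_form
    (T₁ T₂ : Matrix (Fin 2) (Fin 2) ℂ)
    (hT₁ : T₁ ^ 2 = 1) (hT₂ : T₂ ^ 2 = 1)
    (hT₁ne : T₁ ≠ 1) (hT₁ne' : T₁ ≠ -1) (hT₂ne : T₂ ≠ 1) (hT₂ne' : T₂ ≠ -1)
    (l : ℂ) (hl : l ≠ 1)
    (hconj : ∃ Q : Matrix (Fin 2) (Fin 2) ℂ, IsUnit Q ∧
      Q⁻¹ * (T₁ * T₂) * Q = Matrix.diagonal ![l, l⁻¹]) :
    ∃ (g : ℂ) (P : Matrix (Fin 2) (Fin 2) ℂ), g ^ 2 = l + l⁻¹ + 2 ∧ IsUnit P ∧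
      P⁻¹ * T₁ * P = !![1, 0; -g, -1] ∧ P⁻¹ * T₂ * P = !![-1, -g; 0, 1] := by
  obtain ⟨Q, hQ, hD⟩ := hconj
  have hQdet : IsUnit Q.det := (Matrix.isUnit_iff_isUnit_det Q).mp hQ
  have hQQ : Q * Q⁻¹ = 1 := Matrix.mul_nonsing_inv Q hQdet
  have hQ'Q : Q⁻¹ * Q = 1 := Matrix.nonsing_inv_mul Q hQdet
  have e1 : T₁ * T₁ = 1 := by rw [← pow_two]; exact hT₁
  have e2 : T₂ * T₂ = 1 := by rw [← pow_two]; exact hT₂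
  have hS : T₁ * T₂ = Q * Matrix.diagonal ![l, l⁻¹] * Q⁻¹ := by
    rw [← hD]
    calc T₁ * T₂ = (Q * Q⁻¹) * (T₁ * T₂) * (Q * Q⁻¹) := by rw [hQQ, one_mul, mul_one]
    _ = Q * (Q⁻¹ * (T₁ * T₂) * Q) * Q⁻¹ := by noncomm_ring
  have hdT₁ : T₁.det ≠ 0 := by
    intro h
    have h2 : T₁.det ^ 2 = 1 := by rw [← Matrix.det_pow, hT₁, Matrix.det_one]
    rw [h] at h2; norm_num at h2
  have hdT₂ : T₂.det ≠ 0 := by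
    intro h
    have h2 : T₂.det ^ 2 = 1 := by rw [← Matrix.det_pow, hT₂, Matrix.det_one]
    rw [h] at h2; norm_num at h2
  have hdiagdet : (Matrix.diagonal ![l, l⁻¹]).det = l * l⁻¹ := by
    rw [Matrix.det_diagonal, Fin.prod_univ_two]; simp
  have hl0 : l ≠ 0 := by
    intro h
    have h2 : (T₁ * T₂).det = 0 := by
      rw [hS, Matrix.det_mul, Matrix.det_mul, hdiagdet, h]
      simp
    rw [Matrix.det_mul] at h2
    exact (mul_ne_zero hdT₁ hdT₂) h2
  have hdetS : (T₁ * T₂).det = 1 := by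
    rw [hS, Matrix.det_mul, Matrix.det_mul, hdiagdet, Matrix.det_nonsing_inv]
    rw [Ring.inverse_eq_inv']
    field_simp
    exact div_self hQdet.ne_zero
  have htr : (T₁ * T₂).trace = l + l⁻¹ := by
    rw [hS, Matrix.trace_mul_cycle, hQ'Q, one_mul]
    simp [Matrix.trace_fin_two]
  have hdetSx : ∀ x : ℂ, (T₁ * T₂ + x • 1).det = (l + x) * (l⁻¹ + x) := by
    intro x
    have h1 : T₁ * T₂ + x • (1 : Matrix (Fin 2) (Fin 2) ℂ)
        = Q * (Matrix.diagonal ![l, l⁻¹] + x • 1) * Q⁻¹ := by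
      rw [hS, mul_add, add_mul]
      congr 1
      rw [mul_smul_comm, smul_mul_assoc, mul_one, hQQ]
    have h2 : (Matrix.diagonal ![l, l⁻¹] + x • (1 : Matrix (Fin 2) (Fin 2) ℂ)).det
        = (l + x) * (l⁻¹ + x) := by
      rw [Matrix.det_fin_two]
      simp [Matrix.diagonal, Matrix.one_apply]
    rw [h1, Matrix.det_mul, Matrix.det_mul, h2, Matrix.det_nonsing_inv,
      Ring.inverse_eq_inv']
    field_simp [hQdet.ne_zero]
  -- the (-1)-eigenvector of T₂
  have hne2 : T₂ - 1 ≠ 0 := sub_ne_zero.mpr hT₂ne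
  obtain ⟨i₀, j₀, h₀⟩ : ∃ i j, (T₂ - 1) i j ≠ 0 := by
    by_contra hcon; push_neg at hcon
    exact hne2 (Matrix.ext fun i j => by simpa using hcon i j)
  set p₁ : Fin 2 → ℂ := fun k => (T₂ - 1) k j₀ with hp₁def
  have hp₁i : p₁ i₀ ≠ 0 := h₀
  have hT₂p₁ : T₂ *ᵥ p₁ = -p₁ := by
    have hz : (T₂ + 1) * (T₂ - 1) = 0 := by
      have h3 : (T₂ + 1) * (T₂ - 1) = T₂ * T₂ - 1 := by noncomm_ring
      rw [h3, e2, sub_self]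
    have hv : (T₂ + 1) *ᵥ p₁ = 0 := by
      funext k
      have h4 := congrFun (congrFun hz k) j₀
      simpa [Matrix.mul_apply, Matrix.mulVec, dotProduct, Fin.sum_univ_two,
        hp₁def] using h4
    rw [Matrix.add_mulVec, Matrix.one_mulVec, add_eq_zero_iff_eq_neg] at hv
    exact hv
  by_cases hlm : l = -1
  · -- degenerate case: T₁T₂ = -1
    subst hlm
    have hSneg : T₁ * T₂ = -1 := by
      rw [hS]
      have hd : Matrix.diagonal ![(-1 : ℂ), (-1 : ℂ)⁻¹] = -1 := by
        ext i j
        fin_cases i <;> fin_cases j <;>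
          norm_num [Matrix.diagonal, Matrix.one_apply]
      rw [hd, mul_neg, mul_one, neg_mul, hQQ]
    have hT₂eq : T₂ = -T₁ := by
      have h5 := congrArg (fun X => T₁ * X) hSneg
      rw [← mul_assoc, e1, one_mul, mul_neg, mul_one] at h5
      exact h5
    have hT₁p₁ : T₁ *ᵥ p₁ = p₁ := by
      have h6 : (-T₁) *ᵥ p₁ = -p₁ := by rw [← hT₂eq]; exact hT₂p₁
      rw [Matrix.neg_mulVec] at h6
      exact neg_injective h6
    have hne1 : T₁ - 1 ≠ 0 := sub_ne_zero.mpr hT₁ne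
    obtain ⟨i₁, j₁, h₁⟩ : ∃ i j, (T₁ - 1) i j ≠ 0 := by
      by_contra hcon; push_neg at hcon
      exact hne1 (Matrix.ext fun i j => by simpa using hcon i j)
    set p₂ : Fin 2 → ℂ := fun k => (T₁ - 1) k j₁ with hp₂def
    have hp₂i : p₂ i₁ ≠ 0 := h₁
    have hT₁p₂ : T₁ *ᵥ p₂ = -p₂ := by
      have hz : (T₁ + 1) * (T₁ - 1) = 0 := by
        have h3 : (T₁ + 1) * (T₁ - 1) = T₁ * T₁ - 1 := by noncomm_ring
        rw [h3, e1, sub_self]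
      have hv : (T₁ + 1) *ᵥ p₂ = 0 := by
        funext k
        have h4 := congrFun (congrFun hz k) j₁
        simpa [Matrix.mul_apply, Matrix.mulVec, dotProduct, Fin.sum_univ_two,
          hp₂def] using h4
      rw [Matrix.add_mulVec, Matrix.one_mulVec, add_eq_zero_iff_eq_neg] at hv
      exact hv
    have hT₂p₂ : T₂ *ᵥ p₂ = p₂ := by
      rw [hT₂eq, Matrix.neg_mulVec, hT₁p₂, neg_neg]
    have hdet : p₁ 0 * p₂ 1 - p₂ 0 * p₁ 1 ≠ 0 := by
      intro hzero
      obtain ⟨c, hc⟩ := aux_dep p₁ p₂ i₀ hp₁i hzero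
      have h7 : T₁ *ᵥ p₂ = c • p₁ := by
        rw [hc, Matrix.mulVec_smul, hT₁p₁]
      rw [hT₁p₂, ← hc] at h7
      have h8 := congrFun h7 i₁
      simp only [Pi.neg_apply] at h8
      apply hp₂i
      linear_combination (-1/2 : ℂ) * h8
    refine ⟨0, !![p₁ 0, p₂ 0; p₁ 1, p₂ 1], by norm_num, ?_, ?_, ?_⟩
    · rw [Matrix.isUnit_iff_isUnit_det, Matrix.det_fin_two_of, isUnit_iff_ne_zero]
      intro h; apply hdet; linear_combination h
    · have hPA := aux_cols T₁ _ p₁ p₂ 1 0 (-0) (-1) rfl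
        (by rw [hT₁p₁]; funext i; simp) (by rw [hT₁p₂]; funext i; simp)
      rw [mul_assoc, hPA, ← mul_assoc, Matrix.nonsing_inv_mul _ (by
        rw [Matrix.det_fin_two_of, isUnit_iff_ne_zero]
        intro h; apply hdet; linear_combination h), one_mul]
    · have hPB := aux_cols T₂ _ p₁ p₂ (-1) (-0) 0 1 rfl
        (by rw [hT₂p₁]; funext i; simp) (by rw [hT₂p₂]; funext i; simp)
      rw [mul_assoc, hPB, ← mul_assoc, Matrix.nonsing_inv_mul _ (by
        rw [Matrix.det_fin_two_of, isUnit_iff_ne_zero]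
        intro h; apply hdet; linear_combination h), one_mul]
  · -- main case: l ≠ -1
    obtain ⟨g, hg⟩ := IsAlgClosed.exists_pow_nat_eq (l + l⁻¹ + 2) (n := 2) (by norm_num)
    have hg0 : g ≠ 0 := by
      intro h
      rw [h] at hg
      apply hlm
      have h9 : l * (l + l⁻¹ + 2) = (l + 1) ^ 2 := by field_simp; ring
      rw [← hg] at h9
      have h10 : (l + 1) ^ 2 = 0 := by rw [← h9]; ring
      have h11 := pow_eq_zero_iff (n := 2) (by norm_num) |>.mp h10
      linear_combination h11
    set q : Fin 2 → ℂ := T₁ *ᵥ p₁ with hqdef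
    have hq : T₁ *ᵥ q = p₁ := by
      rw [hqdef, Matrix.mulVec_mulVec, e1, Matrix.one_mulVec]
    have hSp : (T₁ * T₂) *ᵥ p₁ = -q := by
      rw [← Matrix.mulVec_mulVec, hT₂p₁, Matrix.mulVec_neg, hqdef]
    have hCH : (T₁ * T₂) * (T₁ * T₂) + 1 = (l + l⁻¹) • (T₁ * T₂) := by
      have h5 := aux_CH (T₁ * T₂)
      rw [hdetS, htr, one_smul] at h5
      exact h5
    have hSq : (T₁ * T₂) *ᵥ q = p₁ + (l + l⁻¹) • q := by
      have h6 := congrArg (fun X => X *ᵥ p₁) hCH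
      simp only [Matrix.add_mulVec, Matrix.one_mulVec, Matrix.smul_mulVec] at h6
      rw [← Matrix.mulVec_mulVec, hSp, Matrix.mulVec_neg, smul_neg] at h6
      funext i
      have h7 := congrFun h6 i
      simp only [Pi.add_apply, Pi.neg_apply, Pi.smul_apply, smul_eq_mul] at h7 ⊢
      linear_combination -h7
    have hT₂q : T₂ *ᵥ q = (l + l⁻¹) • p₁ + q := by
      have h8 : T₁ *ᵥ ((T₁ * T₂) *ᵥ q) = T₂ *ᵥ q := by
        rw [Matrix.mulVec_mulVec, ← mul_assoc, e1, one_mul]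
      rw [hSq, Matrix.mulVec_add, Matrix.mulVec_smul, hq, ← hqdef] at h8
      rw [← h8]
      funext i
      simp only [Pi.add_apply, Pi.smul_apply, smul_eq_mul]
      ring
    set p₂ : Fin 2 → ℂ := g⁻¹ • (p₁ - q) with hp₂def
    have hgp₂ : g • p₂ = p₁ - q := by
      rw [hp₂def, smul_smul, mul_inv_cancel₀ hg0, one_smul]
    have h1 : T₁ *ᵥ p₁ = (1 : ℂ) • p₁ + (-g) • p₂ := by
      rw [← hqdef, one_smul, neg_smul, hgp₂]
      funext i; simp only [Pi.add_apply, Pi.neg_apply, Pi.sub_apply]; ring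
    have h2 : T₁ *ᵥ p₂ = (0 : ℂ) • p₁ + (-1 : ℂ) • p₂ := by
      rw [hp₂def, Matrix.mulVec_smul, Matrix.mulVec_sub, ← hqdef, hq]
      funext i
      simp only [Pi.smul_apply, Pi.sub_apply, Pi.add_apply, Pi.neg_apply, smul_eq_mul,
        zero_smul, neg_smul, zero_add, Pi.zero_apply]
      ring
    have h3 : T₂ *ᵥ p₁ = (-1 : ℂ) • p₁ + (0 : ℂ) • p₂ := by
      rw [hT₂p₁]; funext i; simp
    have h4 : T₂ *ᵥ p₂ = (-g) • p₁ + (1 : ℂ) • p₂ := by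
      refine smul_right_injective (Fin 2 → ℂ) hg0 ?_
      show g • (T₂ *ᵥ p₂) = g • ((-g) • p₁ + (1 : ℂ) • p₂)
      rw [← Matrix.mulVec_smul, hgp₂, Matrix.mulVec_sub, hT₂p₁, hT₂q]
      funext i
      have hp := congrFun hgp₂ i
      simp only [Pi.smul_apply, Pi.sub_apply, Pi.add_apply, Pi.neg_apply, smul_eq_mul,
        one_mul] at hp ⊢
      linear_combination p₁ i * hg - hp
    have hdet : p₁ 0 * p₂ 1 - p₂ 0 * p₁ 1 ≠ 0 := by
      intro hzero
      obtain ⟨c, hc⟩ := aux_dep p₁ p₂ i₀ hp₁i hzero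
      have hq2 : q = (1 - g * c) • p₁ := by
        have h11 : g • p₂ = (g * c) • p₁ := by rw [hc, smul_smul]
        rw [hgp₂] at h11
        funext i
        have h12 := congrFun h11 i
        simp only [Pi.sub_apply, Pi.smul_apply, smul_eq_mul] at h12 ⊢
        linear_combination -h12
      have hεsq : (1 - g * c) * (1 - g * c) = 1 := by
        have h13 : T₁ *ᵥ q = ((1 - g * c) * (1 - g * c)) • p₁ := by
          rw [hq2, Matrix.mulVec_smul, ← hqdef, hq2, smul_smul]
        rw [hq] at h13
        have h14 := congrFun h13 i₀
        simp only [Pi.smul_apply, smul_eq_mul] at h14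
        have h15 : ((1 - g * c) * (1 - g * c) - 1) * p₁ i₀ = 0 := by
          linear_combination -h14
        rcases mul_eq_zero.mp h15 with h16 | h16
        · linear_combination h16
        · exact absurd h16 hp₁i
      set ε : ℂ := 1 - g * c with hεdef
      have hker : (T₁ * T₂ + ε • 1) *ᵥ p₁ = 0 := by
        rw [Matrix.add_mulVec, hSp, Matrix.smul_mulVec, Matrix.one_mulVec, hq2]
        exact neg_add_cancel _
      have hεone : ε = 1 ∨ ε = -1 := mul_self_eq_one_iff.mp hεsq
      have hdne : (T₁ * T₂ + ε • 1).det ≠ 0 := by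
        rw [hdetSx ε]
        rcases hεone with h | h <;> rw [h]
        · apply mul_ne_zero
          · intro hh; exact hlm (by linear_combination hh)
          · intro hh
            apply hlm
            have : l⁻¹ = -1 := by linear_combination hh
            rw [← inv_inv l, this]; norm_num
        · apply mul_ne_zero
          · intro hh; exact hl (by linear_combination hh)
          · intro hh
            apply hl
            have : l⁻¹ = 1 := by linear_combination hh
            rw [← inv_inv l, this]; norm_num
      exact aux_ker _ hdne p₁ i₀ hp₁i hker
    have hdetP : IsUnit (!![p₁ 0, p₂ 0; p₁ 1, p₂ 1]).det := by
      rw [Matrix.det_fin_two_of, isUnit_iff_ne_zero]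
      intro h; apply hdet; linear_combination h
    refine ⟨g, !![p₁ 0, p₂ 0; p₁ 1, p₂ 1], hg, ?_, ?_, ?_⟩
    · rw [Matrix.isUnit_iff_isUnit_det]; exact hdetP
    · have hPA := aux_cols T₁ _ p₁ p₂ 1 0 (-g) (-1) rfl h1 h2
      rw [mul_assoc, hPA, ← mul_assoc, Matrix.nonsing_inv_mul _ hdetP, one_mul]
    · have hPB := aux_cols T₂ _ p₁ p₂ (-1) (-g) 0 1 rfl h3 h4
      rw [mul_assoc, hPB, ← mul_assoc, Matrix.nonsing_inv_mul _ hdetP, one_mul]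
end

section
/- Let U ⊆ ℂ² and let Φ, Ξ : ℂ² → ℂ² be maps with Φ(U) ⊆ U, Ξ(U) ⊆ U, Ξ(Φ(ξ)) = ξ and Φ(Ξ(ξ)) = ξ for all ξ ∈ U. Let σ(ξ₁, ξ₂) := (ξ₂, ξ₁) and assume σ(U) ⊆ U. Suppose Φ preserves h(ξ) := ξ₁·ξ₂, i.e. (Φξ)₁·(Φξ)₂ = ξ₁·ξ₂ for all ξ ∈ U, and that σ(Φ(σ(ξ))) = Ξ(ξ) for all ξ ∈ U. Define f(η) := ((Φη)₁ − η₁)/η₁. Then for every ξ ∈ U with ξ₂ ≠ 0 and (Ξξ)₁ ≠ 0 one has f(σ(ξ)) = f(Ξ(ξ)). -/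
/-- for a map `Φ` preserving `h(ξ) = ξ₁ξ₂` with inverse `Ξ` on `U`, reversed
by the swap `σ`, the function `f(η) = ((Φη)₁ − η₁)/η₁` satisfies `f ∘ σ = f ∘ Ξ`
wherever defined. -/
theorem fixed_point_generator_sigma_identity
    (U : Set (ℂ × ℂ)) (Φ Ξ : ℂ × ℂ → ℂ × ℂ)
    (hΦU : ∀ ξ ∈ U, Φ ξ ∈ U) (hΞU : ∀ ξ ∈ U, Ξ ξ ∈ U)
    (hleft : ∀ ξ ∈ U, Ξ (Φ ξ) = ξ) (hright : ∀ ξ ∈ U, Φ (Ξ ξ) = ξ)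
    (σ : ℂ × ℂ → ℂ × ℂ) (hσ : ∀ ξ : ℂ × ℂ, σ ξ = (ξ.2, ξ.1)) (hσU : ∀ ξ ∈ U, σ ξ ∈ U)
    (hh : ∀ ξ ∈ U, (Φ ξ).1 * (Φ ξ).2 = ξ.1 * ξ.2)
    (hrev : ∀ ξ ∈ U, σ (Φ (σ ξ)) = Ξ ξ)
    (f : ℂ × ℂ → ℂ) (hf : ∀ η : ℂ × ℂ, f η = ((Φ η).1 - η.1) / η.1) :
    ∀ ξ ∈ U, ξ.2 ≠ 0 → (Ξ ξ).1 ≠ 0 → f (σ ξ) = f (Ξ ξ) := by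
  intro ξ hξ h2 hΞ1
  have hΞmem := hΞU ξ hξ
  -- (Φ (σ ξ)).1 = (Ξ ξ).2
  have hrev' := hrev ξ hξ
  rw [hσ (Φ (σ ξ))] at hrev'
  have h1 : (Φ (σ ξ)).1 = (Ξ ξ).2 := by
    have := congrArg Prod.snd hrev'; simpa using this
  -- h preservation at Ξ ξ
  have hhΞ : ξ.1 * ξ.2 = (Ξ ξ).1 * (Ξ ξ).2 := by
    have := hh (Ξ ξ) hΞmem
    rwa [hright ξ hξ] at this
  rw [hf, hf, hσ ξ, hright ξ hξ]
  simp only []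
  rw [hσ ξ] at h1
  rw [h1]
  field_simp
  linear_combination -hhΞ
end

section
/- Let s be a positive integer, a ∈ ℂ, and β : ℂ → ℂ a nowhere-vanishing function satisfying conj(β(conj h)) = β(h)⁻¹ for all h ∈ ℂ. For ξ = (ξ₁, ξ₂) ∈ ℂ², set h := ξ₁·ξ₂ and define ψ(ξ) := ( ((β(h)⁻¹ + a·h^s·ξ₁)/(1 + conj(a)·h^s·β(h)⁻¹·ξ₂))·ξ₁ , ((β(h) + conj(a)·h^s·ξ₂)/(1 + a·h^s·β(h)·ξ₁))·ξ₂ ). Then, at every point where the denominators involved are nonzero: (1) the two components of ψ(ξ) multiply to ξ₁·ξ₂, i.e. h ∘ ψ = h; (2) conj(ψ(conj ξ₁, conj ξ₂)) = σ(ψ(ξ₂, ξ₁)), where σ(η₁, η₂) = (η₂, η₁). -/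
lemma aux_frac (n1 d1 n2 d2 x y : ℂ) (h1 : d1 ≠ 0) (h2 : d2 ≠ 0)
    (h : n1 * n2 = d1 * d2) : n1 / d1 * x * (n2 / d2 * y) = x * y := by
  field_simp
  linear_combination x * y * h

/-- the explicit rational map `ψ` built from `β` (with
`conj (β (conj h)) = (β h)⁻¹`) preserves `h = ξ₁ξ₂` and satisfies `ψ̄ = σ ∘ ψ ∘ σ`
wherever the denominators involved do not vanish. -/
theorem divergence_example_map
    (s : ℕ) (hs : 0 < s) (a : ℂ) (β : ℂ → ℂ)
    (hβ0 : ∀ h : ℂ, β h ≠ 0)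
    (hβ : ∀ h : ℂ, starRingEnd ℂ (β (starRingEnd ℂ h)) = (β h)⁻¹)
    (ψ : ℂ × ℂ → ℂ × ℂ)
    (hψ : ∀ ξ : ℂ × ℂ,
      ψ ξ = ((((β (ξ.1 * ξ.2))⁻¹ + a * (ξ.1 * ξ.2) ^ s * ξ.1) /
              (1 + starRingEnd ℂ a * (ξ.1 * ξ.2) ^ s * (β (ξ.1 * ξ.2))⁻¹ * ξ.2)) * ξ.1,
             ((β (ξ.1 * ξ.2) + starRingEnd ℂ a * (ξ.1 * ξ.2) ^ s * ξ.2) /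
              (1 + a * (ξ.1 * ξ.2) ^ s * β (ξ.1 * ξ.2) * ξ.1)) * ξ.2)) :
    (∀ ξ : ℂ × ℂ,
      1 + starRingEnd ℂ a * (ξ.1 * ξ.2) ^ s * (β (ξ.1 * ξ.2))⁻¹ * ξ.2 ≠ 0 →
      1 + a * (ξ.1 * ξ.2) ^ s * β (ξ.1 * ξ.2) * ξ.1 ≠ 0 →
      (ψ ξ).1 * (ψ ξ).2 = ξ.1 * ξ.2) ∧
    (∀ ξ₁ ξ₂ : ℂ,
      1 + starRingEnd ℂ a * (ξ₂ * ξ₁) ^ s * (β (ξ₂ * ξ₁))⁻¹ * ξ₁ ≠ 0 →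
      1 + a * (ξ₂ * ξ₁) ^ s * β (ξ₂ * ξ₁) * ξ₂ ≠ 0 →
      1 + starRingEnd ℂ a * (starRingEnd ℂ ξ₁ * starRingEnd ℂ ξ₂) ^ s *
          (β (starRingEnd ℂ ξ₁ * starRingEnd ℂ ξ₂))⁻¹ * starRingEnd ℂ ξ₂ ≠ 0 →
      1 + a * (starRingEnd ℂ ξ₁ * starRingEnd ℂ ξ₂) ^ s *
          β (starRingEnd ℂ ξ₁ * starRingEnd ℂ ξ₂) * starRingEnd ℂ ξ₁ ≠ 0 →
      (starRingEnd ℂ (ψ (starRingEnd ℂ ξ₁, starRingEnd ℂ ξ₂)).1,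
        starRingEnd ℂ (ψ (starRingEnd ℂ ξ₁, starRingEnd ℂ ξ₂)).2) =
      ((ψ (ξ₂, ξ₁)).2, (ψ (ξ₂, ξ₁)).1)) := by
  constructor
  · intro ξ h1 h2
    rw [hψ]
    dsimp only
    have hb := hβ0 (ξ.1 * ξ.2)
    apply aux_frac _ _ _ _ _ _ h1 h2
    have hbb : β (ξ.1 * ξ.2) * (β (ξ.1 * ξ.2))⁻¹ = 1 := mul_inv_cancel₀ hb
    linear_combination (1 - a * starRingEnd ℂ a * (ξ.1 * ξ.2) ^ s * (ξ.1 * ξ.2) ^ s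
      * ξ.1 * ξ.2) * hbb
  · intro ξ₁ ξ₂ _ _ _ _
    rw [hψ, hψ]
    dsimp only
    have hβ' : starRingEnd ℂ (β (starRingEnd ℂ ξ₁ * starRingEnd ℂ ξ₂)) = (β (ξ₁ * ξ₂))⁻¹ := by
      rw [← map_mul]; exact hβ _
    rw [mul_comm ξ₂ ξ₁]
    simp only [map_mul, map_add, map_div₀, map_pow, map_inv₀, map_one,
      hβ', Complex.conj_conj, inv_inv]
end
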